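/- The characteristic polynomial of the poset Π^β_n of pointed partitions of type β (type-B partitions with no pointed element in the zero block, all other blocks pointed in opposite pairs) equals (x-1)·(x-(2n+1))^(n-1), with constant term (-1)^n·(2n+1)^(n-1). -/

import Mathlib

open scoped Classical
open Finset

/-- Negation on the ground set `{±1,…,±n}`, encoded as `Fin n × Bool`. -/
abbrev negE {n : ℕ} (x : Fin n × Bool) : Fin n × Bool := (x.1, !x.2)

/-- The poset `Π^β_n` of pointed partitions of type `β`: type-`B_n` partitions with no
pointed element in the zero block and opposite pairs of pointed elements in the other
(paired) blocks.  Encoding: `f x = none` iff `x` lies in the zero block, and otherwise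
`f x = some p` where `p` is the pointed element of the block of `x`; the conditions say
that pointed elements are pointed in their own block and that `f` is equivariant for
negation (so blocks come in opposite pairs with opposite pointed elements, and the zero
block is self-opposite). -/
abbrev PtdPartBeta (n : ℕ) :=
  {f : Fin n × Bool → Option (Fin n × Bool) //
    (∀ x p, f x = some p → f p = some p) ∧ ∀ x, f (negE x) = (f x).map negE}

/-- The order: `a ≤ b` iff the partition of `a` refines that of `b`
and every pointed element of `b` is pointed in `a`. -/
def PtdPartBeta.le {n : ℕ} (a b : PtdPartBeta n) : Prop :=
  (∀ x, a.1 x = none → b.1 x = none) ∧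
  (∀ x p, a.1 x = some p → b.1 x = b.1 p) ∧
  (∀ p, b.1 p = some p → a.1 p = some p)

/-- The minimal element: empty zero block, all other blocks pointed singletons. -/
def PtdPartBeta.bot (n : ℕ) : PtdPartBeta n :=
  ⟨fun x => some x, ⟨fun _ _ _ => rfl, fun _ => rfl⟩⟩

/-- The maximal element: everything in the (unpointed) zero block. -/
def PtdPartBeta.top (n : ℕ) : PtdPartBeta n :=
  ⟨fun _ => none, ⟨fun _ _ h => by simp at h, fun _ => rfl⟩⟩

/-- The number of pairs of opposite (non-zero) blocks. -/
noncomputable def PtdPartBeta.pairs {n : ℕ} (f : Fin n × Bool → Option (Fin n × Bool)) : ℕ :=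
  (univ.filter fun x => f x = some x).card / 2

namespace Stmt11Aux

section AbelPart
open Polynomial

/-- k-th finite difference of a polynomial of degree < k vanishes. -/
theorem finDiff : ∀ (k : ℕ) (p : Polynomial ℤ), p.natDegree < k →
    ∑ j ∈ range (k+1), (-1)^(k-j) * (k.choose j : ℤ) * p.eval (j:ℤ) = 0 := by
  intro k
  induction k with
  | zero => intro p hp; exact absurd hp (Nat.not_lt_zero _)
  | succ k ih =>
    intro p hp
    by_cases h0 : p.natDegree = 0
    · obtain ⟨c, rfl⟩ := Polynomial.natDegree_eq_zero.mp h0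
      simp only [Polynomial.eval_C]
      have : ∑ j ∈ range (k+1+1), (-1:ℤ)^(k+1-j) * ((k+1).choose j : ℤ) * c
          = (-1)^(k+1) * c * ∑ j ∈ range (k+1+1), (-1:ℤ)^j * ((k+1).choose j : ℤ) := by
        rw [Finset.mul_sum]
        refine Finset.sum_congr rfl fun j hj => ?_
        have hj' : j ≤ k+1 := Nat.lt_succ_iff.mp (Finset.mem_range.mp hj)
        have h1 : (-1:ℤ)^(k+1-j) * (-1)^j = (-1)^(k+1) := by
          rw [← pow_add]; congr 1; omega
        have hsq : (-1:ℤ)^j * (-1)^j = 1 := by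
          rw [← pow_add]; exact Even.neg_one_pow ⟨j, rfl⟩
        have h2 : (-1:ℤ)^(k+1-j) = (-1)^(k+1) * (-1)^j := by
          rw [← h1, mul_assoc, hsq, mul_one]
        rw [h2]; ring
      rw [this, Int.alternating_sum_range_choose_of_ne (Nat.succ_ne_zero k), mul_zero]
    · set q : Polynomial ℤ := p.comp (X + C 1) - p with hq
      have hpc0 : p ≠ 0 := fun h => h0 (by simp [h])
      have hcompdeg : (p.comp (X + C 1)).natDegree = p.natDegree := by
        rw [Polynomial.natDegree_comp, Polynomial.natDegree_X_add_C, mul_one]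
      have hcompne : p.comp (X + C 1) ≠ 0 := by
        intro h; rw [h, Polynomial.natDegree_zero] at hcompdeg; exact h0 hcompdeg.symm
      have hlc : (p.comp (X + C 1)).leadingCoeff = p.leadingCoeff := by
        rw [Polynomial.leadingCoeff_comp (by rw [Polynomial.natDegree_X_add_C]; exact one_ne_zero)]
        rw [(Polynomial.monic_X_add_C (1:ℤ)).leadingCoeff, one_pow, mul_one]
      have hqdeg : q.natDegree < p.natDegree := by
        have hd : (p.comp (X + C 1)).degree = p.degree := by
          rw [Polynomial.degree_eq_natDegree hcompne, Polynomial.degree_eq_natDegree hpc0, hcompdeg]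
        have hlt := Polynomial.degree_sub_lt hd hcompne hlc
        rcases eq_or_ne q 0 with h | h
        · rw [h]; simpa using Nat.pos_of_ne_zero h0
        · exact Polynomial.natDegree_lt_natDegree h (by rwa [hd] at hlt)
      have hqlt : q.natDegree < k := lt_of_lt_of_le hqdeg (Nat.lt_succ_iff.mp hp)
      have hqev : ∀ j : ℤ, q.eval j = p.eval (j+1) - p.eval j := by
        intro j; simp [hq, Polynomial.eval_comp]
      have key := ih q hqlt
      have expand : ∑ j ∈ range (k+1+1), (-1:ℤ)^(k+1-j) * ((k+1).choose j : ℤ) * p.eval (j:ℤ)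
          = ∑ i ∈ range (k+1), (-1:ℤ)^(k-i) * (k.choose i : ℤ) * (p.eval ((i:ℤ)+1) - p.eval (i:ℤ)) := by
        rw [Finset.sum_range_succ']
        have hsplit : ∀ i ∈ range (k+1),
            (-1:ℤ)^(k+1-(i+1)) * (((k+1).choose (i+1) : ℕ) : ℤ) * p.eval (((i+1 : ℕ)) : ℤ)
            = (-1)^(k-i)*(k.choose i:ℤ)*p.eval ((i:ℤ)+1)
              + (-1)^(k-i)*(k.choose (i+1):ℤ)*p.eval ((i:ℤ)+1) := by
          intro i hi
          have h1 : k+1-(i+1) = k-i := by omega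
          rw [h1, Nat.choose_succ_succ]
          push_cast
          ring
        rw [Finset.sum_congr rfl hsplit, Finset.sum_add_distrib]
        have hrhs : ∑ i ∈ range (k+1), (-1:ℤ)^(k-i) * (k.choose i : ℤ) * (p.eval ((i:ℤ)+1) - p.eval (i:ℤ))
            = ∑ i ∈ range (k+1), (-1:ℤ)^(k-i) * (k.choose i : ℤ) * p.eval ((i:ℤ)+1)
              - ∑ i ∈ range (k+1), (-1:ℤ)^(k-i) * (k.choose i : ℤ) * p.eval (i:ℤ) := by
          rw [← Finset.sum_sub_distrib]
          exact Finset.sum_congr rfl fun i _ => by ring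
        rw [hrhs]
        have hgoal : ∑ i ∈ range (k+1), (-1:ℤ)^(k-i)*(k.choose (i+1):ℤ)*p.eval ((i:ℤ)+1)
              + (-1:ℤ)^(k+1-0) * (((k+1).choose 0 : ℕ):ℤ) * p.eval ((0:ℕ):ℤ)
            = - ∑ i ∈ range (k+1), (-1:ℤ)^(k-i) * (k.choose i : ℤ) * p.eval (i:ℤ) := by
          rw [Finset.sum_range_succ' (fun i => (-1:ℤ)^(k-i) * (k.choose i : ℤ) * p.eval (i:ℤ))]
          rw [Finset.sum_range_succ]
          have hzero : (-1:ℤ)^(k-k)*(k.choose (k+1):ℤ)*p.eval ((k:ℤ)+1) = 0 := by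
            rw [Nat.choose_succ_self]; push_cast; ring
          rw [hzero, add_zero]
          have hcancel : ∑ i ∈ range k, (-1:ℤ)^(k-i)*(k.choose (i+1):ℤ)*p.eval ((i:ℤ)+1)
              = - ∑ i ∈ range k, (-1:ℤ)^(k-(i+1)) * ((k.choose (i+1)) : ℤ) * p.eval (((i+1:ℕ)):ℤ) := by
            rw [← Finset.sum_neg_distrib]
            refine Finset.sum_congr rfl fun i hi => ?_
            have hik : i < k := Finset.mem_range.mp hi
            have h2 : k - i = (k - (i+1)) + 1 := by omega
            rw [h2, pow_succ]
            push_cast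
            ring
          rw [hcancel]
          have h3 : (-1:ℤ)^(k+1-0) * (((k+1).choose 0 : ℕ):ℤ) * p.eval ((0:ℕ):ℤ)
              = - ((-1:ℤ)^(k-0) * ((k.choose 0 : ℕ):ℤ) * p.eval ((0:ℕ):ℤ)) := by
            simp only [Nat.sub_zero, Nat.choose_zero_right, Nat.cast_one, pow_succ]
            ring
          rw [h3]
          ring
        linear_combination hgoal
      rw [expand]
      calc ∑ i ∈ range (k+1), (-1:ℤ)^(k-i) * (k.choose i : ℤ) * (p.eval ((i:ℤ)+1) - p.eval (i:ℤ))
          = ∑ i ∈ range (k+1), (-1:ℤ)^(k-i) * (k.choose i : ℤ) * q.eval (i:ℤ) := by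
            refine Finset.sum_congr rfl fun i _ => by rw [hqev]
        _ = 0 := key

noncomputable def Gp (k : ℕ) (a : ℤ) : Polynomial ℤ :=
  ∑ j ∈ range (k+1),
    C ((k.choose j : ℤ) * (if j = 0 then 1 else a * (a - 2*j)^(j-1))) * (X + C (2*(j:ℤ)))^(k-j)

lemma Gderiv (k : ℕ) (a : ℤ) : derivative (Gp (k+1) a) = C ((k:ℤ)+1) * Gp k a := by
  unfold Gp
  rw [derivative_sum, Finset.sum_range_succ, Finset.mul_sum]
  have hlast : derivative (C ((((k+1).choose (k+1) : ℕ):ℤ) * (if k+1 = 0 then 1 else a * (a - 2*(↑(k+1)))^(k+1-1)))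
      * (X + C (2*(((k+1):ℕ):ℤ)))^(k+1-(k+1))) = 0 := by
    simp only [Nat.sub_self, pow_zero, mul_one, derivative_C]
  rw [hlast, add_zero]
  refine Finset.sum_congr rfl fun j hj => ?_
  have hjk : j ≤ k := Nat.lt_succ_iff.mp (Finset.mem_range.mp hj)
  rw [derivative_mul, derivative_C, zero_mul, zero_add, Polynomial.derivative_pow,
    derivative_add, derivative_X, derivative_C, add_zero, mul_one]
  have he : k+1-j-1 = k-j := by omega
  rw [he, ← mul_assoc, ← C_mul, ← mul_assoc, ← C_mul]
  congr 1
  congr 1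
  have hcast : ((k+1-j : ℕ) : ℤ) = (k:ℤ)+1-j := by
    have : (j:ℤ) ≤ (k:ℤ)+1 := by exact_mod_cast Nat.le_succ_of_le hjk
    push_cast [Nat.cast_sub (by omega : j ≤ k+1)]; ring
  have hch' : (((k+1).choose j : ℕ) : ℤ) * ((k:ℤ)+1-j) = ((k:ℤ)+1) * ((k.choose j : ℕ) : ℤ) := by
    have h := Nat.choose_mul_succ_eq k j
    have h2 : ((k.choose j : ℕ) : ℤ) * ((k:ℤ)+1) = (((k+1).choose j : ℕ) : ℤ) * ((k+1-j : ℕ) : ℤ) := by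
      exact_mod_cast congrArg (Nat.cast (R := ℤ)) h
    rw [hcast] at h2
    linarith
  rw [hcast]
  linear_combination (if j = 0 then (1:ℤ) else a * (a - 2*j)^(j-1)) * hch'

lemma Gmain : ∀ (k : ℕ) (a : ℤ), Gp k a = (X + C a)^k := by
  intro k
  induction k with
  | zero => intro a; simp [Gp]
  | succ k ih =>
    intro a
    have hD : derivative (Gp (k+1) a - (X + C a)^(k+1)) = 0 := by
      rw [derivative_sub, Gderiv, ih, Polynomial.derivative_pow, derivative_add,
        derivative_X, derivative_C, add_zero, mul_one]
      push_cast
      ring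
    have hC := Polynomial.eq_C_of_derivative_eq_zero hD
    have hPq : (C a * (C a - C 2 * X : Polynomial ℤ)^k).natDegree < k+1 := by
      have h1 : (C a - C 2 * X : Polynomial ℤ).natDegree ≤ 1 := by
        refine le_trans (Polynomial.natDegree_sub_le _ _) ?_
        simp [Polynomial.natDegree_C_mul_le]
      calc (C a * (C a - C 2 * X : Polynomial ℤ)^k).natDegree
          ≤ (C a).natDegree + ((C a - C 2 * X : Polynomial ℤ)^k).natDegree :=
            Polynomial.natDegree_mul_le
        _ ≤ 0 + k * 1 := by
            refine add_le_add (by simp) (le_trans (Polynomial.natDegree_pow_le) ?_)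
            exact Nat.mul_le_mul_left k h1
        _ < k + 1 := by omega
    have heval : (Gp (k+1) a).eval (-a) = 0 := by
      have hFD := finDiff (k+1) (C a * (C a - C 2 * X)^k) hPq
      rw [← hFD]
      unfold Gp
      rw [Polynomial.eval_finset_sum]
      refine Finset.sum_congr rfl fun j hj => ?_
      have hj2 : j ≤ k+1 := Nat.lt_succ_iff.mp (Finset.mem_range.mp hj)
      simp only [Polynomial.eval_mul, Polynomial.eval_pow, Polynomial.eval_add,
        Polynomial.eval_X, Polynomial.eval_C, Polynomial.eval_sub]
      rcases Nat.eq_zero_or_pos j with h0 | h1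
      · subst h0
        norm_num
        rw [neg_pow, pow_succ]
        ring
      · rw [if_neg (by omega)]
        have hsplit : (-a + 2*(j:ℤ))^(k+1-j) = (-1)^(k+1-j) * (a - 2*j)^(k+1-j) := by
          have : (-a + 2*(j:ℤ)) = -(a - 2*j) := by ring
          rw [this, neg_pow]
        rw [hsplit]
        have hexp : (a - 2*(j:ℤ))^(j-1) * (a - 2*j)^(k+1-j) = (a-2*j)^k := by
          rw [← pow_add]
          congr 1
          omega
        calc ((k+1).choose j : ℤ) * (a * (a - 2*j)^(j-1)) * ((-1)^(k+1-j) * (a - 2*j)^(k+1-j))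
            = (-1)^(k+1-j) * ((k+1).choose j : ℤ) * (a * ((a - 2*(j:ℤ))^(j-1) * (a - 2*j)^(k+1-j))) := by
              ring
          _ = (-1)^(k+1-j) * ((k+1).choose j : ℤ) * (a * (a-2*j)^k) := by rw [hexp]
    have hcval : (Gp (k+1) a).coeff 0 - ((X + C a)^(k+1)).coeff 0 = 0 := by
      have h2 : (Gp (k+1) a - (X + C a)^(k+1)).eval (-a) = (Gp (k+1) a).coeff 0 - ((X + C a)^(k+1)).coeff 0 := by
        rw [hC]
        simp [Polynomial.coeff_sub]
      rw [Polynomial.eval_sub, heval] at h2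
      have h3 : ((X + C a)^(k+1)).eval (-a) = 0 := by
        simp
      rw [h3, sub_zero] at h2
      linarith
    have : Gp (k+1) a - (X + C a)^(k+1) = 0 := by
      rw [hC, Polynomial.coeff_sub, hcval, map_zero]
    exact sub_eq_zero.mp this

/-- Abel-type identity. -/
theorem abelId' (k : ℕ) (a : ℤ) :
    ∑ j ∈ range (k+1), (k.choose j : ℤ) * (if j = 0 then 1 else a * (a - 2*j)^(j-1)) * (1 + 2*(j:ℤ))^(k-j)
      = (1+a)^k := by
  have h := congrArg (Polynomial.eval (1:ℤ)) (Gmain k a)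
  rw [Gp, Polynomial.eval_finset_sum] at h
  simp only [Polynomial.eval_mul, Polynomial.eval_pow, Polynomial.eval_add,
    Polynomial.eval_X, Polynomial.eval_C] at h
  exact h

end AbelPart


variable {n : ℕ}

lemma negE_negE (x : Fin n × Bool) : negE (negE x) = x := by
  unfold negE; simp

lemma negE_inj {x y : Fin n × Bool} (h : negE x = negE y) : x = y := by
  have := congrArg negE h
  rwa [negE_negE, negE_negE] at this

lemma negE_ne (x : Fin n × Bool) : negE x ≠ x := by
  intro h; have := congrArg Prod.snd h; simp at this

lemma pointed_neg {f : Fin n × Bool → Option (Fin n × Bool)}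
    (hf2 : ∀ x, f (negE x) = (f x).map negE) {p : Fin n × Bool} (hp : f p = some p) :
    f (negE p) = some (negE p) := by
  rw [hf2 p, hp]; rfl

/-- The number of pairs equals the number of pointed elements with second component `false`. -/
lemma pairs_eq_card (f : Fin n × Bool → Option (Fin n × Bool))
    (hf2 : ∀ x, f (negE x) = (f x).map negE) :
    PtdPartBeta.pairs f
      = (univ.filter (fun p : Fin n × Bool => f p = some p ∧ p.2 = false)).card := by
  unfold PtdPartBeta.pairs
  set P := univ.filter (fun p : Fin n × Bool => f p = some p) with hP
  have hsplit := Finset.card_filter_add_card_filter_not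
    (s := P) (p := fun p : Fin n × Bool => p.2 = false)
  have h1 : P.filter (fun p => p.2 = false)
      = univ.filter (fun p : Fin n × Bool => f p = some p ∧ p.2 = false) := by
    rw [hP, Finset.filter_filter]
  have h2 : (P.filter (fun p => ¬ p.2 = false)).card
      = (univ.filter (fun p : Fin n × Bool => f p = some p ∧ p.2 = false)).card := by
    refine Finset.card_nbij' negE negE ?_ ?_ ?_ ?_
    · intro p hp
      rw [hP] at hp
      simp only [Finset.mem_coe, Finset.mem_filter, Finset.mem_univ, true_and] at hp ⊢
      refine ⟨pointed_neg hf2 hp.1, ?_⟩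
      have := hp.2
      simp only [Bool.not_eq_false] at this
      simp [negE, this]
    · intro p hp
      simp only [Finset.mem_coe, Finset.mem_filter, Finset.mem_univ, true_and] at hp
      rw [hP]
      simp only [Finset.mem_coe, Finset.mem_filter, Finset.mem_univ, true_and]
      exact ⟨pointed_neg hf2 hp.1, by simp [hp.2]⟩
    · intro p _; exact negE_negE p
    · intro p _; exact negE_negE p
  rw [h1, h2] at hsplit
  omega


/-- The representatives of the pointed pairs of `π`. -/
noncomputable def Rset (π : PtdPartBeta n) : Finset (Fin n × Bool) :=
  univ.filter (fun p => π.1 p = some p ∧ p.2 = false)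

lemma mem_Rset {π : PtdPartBeta n} {p : Fin n × Bool} :
    p ∈ Rset π ↔ π.1 p = some p ∧ p.2 = false := by
  simp [Rset]

/-- Encoding of an upper element `b ≥ π` as a function on `Rset π`. -/
def good (π : PtdPartBeta n) (h : Fin n × Bool → Option (Fin n × Bool)) : Prop :=
  (∀ p, p ∉ Rset π → h p = none) ∧
  (∀ p ∈ Rset π, ∀ q, h p = some q → ∃ r ∈ Rset π, h r = some r ∧ (q = r ∨ q = negE r))

/-- Decoding map: extend `h` along the blocks of `π`. -/
def Gfun (π : PtdPartBeta n) (h : Fin n × Bool → Option (Fin n × Bool)) :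
    Fin n × Bool → Option (Fin n × Bool) :=
  fun x => (π.1 x).bind (fun p => if p.2 = false then h p else (h (negE p)).map negE)

lemma Gfun_root {π : PtdPartBeta n} {h : Fin n × Bool → Option (Fin n × Bool)}
    {r : Fin n × Bool} (hr : r ∈ Rset π) (hh : h r = some r) :
    Gfun π h r = some r ∧ Gfun π h (negE r) = some (negE r) := by
  obtain ⟨hr1, hr2⟩ := mem_Rset.mp hr
  constructor
  · unfold Gfun
    rw [hr1]
    simp only [Option.bind_some]
    rw [if_pos hr2, hh]
  · unfold Gfun
    rw [pointed_neg π.2.2 hr1]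
    simp only [Option.bind_some]
    rw [if_neg (by simp [negE, hr2]), negE_negE, hh]
    rfl

lemma Gfun_target {π : PtdPartBeta n} {h : Fin n × Bool → Option (Fin n × Bool)}
    (hg : good π h) {x q : Fin n × Bool} (hx : Gfun π h x = some q) :
    ∃ r ∈ Rset π, h r = some r ∧ (q = r ∨ q = negE r) := by
  unfold Gfun at hx
  obtain ⟨p, hp, hstep⟩ := Option.bind_eq_some_iff.mp hx
  have hpp : π.1 p = some p := π.2.1 x p hp
  by_cases hps : p.2 = false
  · rw [if_pos hps] at hstep
    exact hg.2 p (mem_Rset.mpr ⟨hpp, hps⟩) q hstep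
  · rw [if_neg hps] at hstep
    obtain ⟨q', hq', hqq⟩ := Option.map_eq_some_iff.mp hstep
    have hnp : negE p ∈ Rset π := by
      refine mem_Rset.mpr ⟨pointed_neg π.2.2 hpp, ?_⟩
      simp only [Bool.not_eq_false] at hps
      simp [negE, hps]
    obtain ⟨r, hrR, hr, hqr⟩ := hg.2 (negE p) hnp q' hq'
    refine ⟨r, hrR, hr, ?_⟩
    rcases hqr with h1 | h1
    · right; rw [← hqq, h1]
    · left; rw [← hqq, h1, negE_negE]

lemma Gfun_valid {π : PtdPartBeta n} {h : Fin n × Bool → Option (Fin n × Bool)}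
    (hg : good π h) :
    (∀ x p, Gfun π h x = some p → Gfun π h p = some p) ∧
    (∀ x, Gfun π h (negE x) = (Gfun π h x).map negE) := by
  constructor
  · intro x q hx
    obtain ⟨r, hrR, hr, hqr⟩ := Gfun_target hg hx
    rcases hqr with rfl | rfl
    · exact (Gfun_root hrR hr).1
    · exact (Gfun_root hrR hr).2
  · intro x
    unfold Gfun
    rw [π.2.2 x]
    cases hfx : π.1 x with
    | none => rfl
    | some p =>
      simp only [Option.map_some, Option.bind_some]
      by_cases hps : p.2 = false
      · rw [if_pos hps, if_neg (by simp [negE, hps]), negE_negE]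
      · rw [if_neg hps, if_pos (by simp only [Bool.not_eq_false] at hps; simp [negE, hps])]
        cases hv : h (negE p) with
        | none => rfl
        | some q => simp [negE_negE]

/-- The decoded element of the poset. -/
def GElem (π : PtdPartBeta n) (h : Fin n × Bool → Option (Fin n × Bool)) (hg : good π h) :
    PtdPartBeta n := ⟨Gfun π h, Gfun_valid hg⟩

lemma GElem_ge {π : PtdPartBeta n} {h : Fin n × Bool → Option (Fin n × Bool)} (hg : good π h) :
    PtdPartBeta.le π (GElem π h hg) := by
  refine ⟨?_, ?_, ?_⟩
  · intro x hx
    show Gfun π h x = none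
    unfold Gfun
    rw [hx]; rfl
  · intro x p hx
    show Gfun π h x = Gfun π h p
    have hpp : π.1 p = some p := π.2.1 x p hx
    unfold Gfun
    rw [hx, hpp]
  · intro p hp
    obtain ⟨r, hrR, _, hqr⟩ := Gfun_target hg hp
    rcases hqr with rfl | rfl
    · exact (mem_Rset.mp hrR).1
    · exact pointed_neg π.2.2 (mem_Rset.mp hrR).1

/-- The encoding map. -/
noncomputable def Ffun (π : PtdPartBeta n) (b : PtdPartBeta n) : Fin n × Bool → Option (Fin n × Bool) :=
  fun p => if p ∈ Rset π then b.1 p else none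

lemma Ffun_good {π b : PtdPartBeta n} (hle : PtdPartBeta.le π b) : good π (Ffun π b) := by
  constructor
  · intro p hp; simp [Ffun, hp]
  · intro p hp q hq
    rw [Ffun, if_pos hp] at hq
    have hbq : b.1 q = some q := b.2.1 p q hq
    have hπq : π.1 q = some q := hle.2.2 q hbq
    by_cases hqs : q.2 = false
    · refine ⟨q, mem_Rset.mpr ⟨hπq, hqs⟩, ?_, Or.inl rfl⟩
      rw [Ffun, if_pos (mem_Rset.mpr ⟨hπq, hqs⟩)]; exact hbq
    · have hnq : negE q ∈ Rset π := by
        refine mem_Rset.mpr ⟨pointed_neg π.2.2 hπq, ?_⟩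
        simp only [Bool.not_eq_false] at hqs
        simp [negE, hqs]
      refine ⟨negE q, hnq, ?_, Or.inr (negE_negE q).symm⟩
      rw [Ffun, if_pos hnq]
      exact pointed_neg b.2.2 hbq

lemma Gfun_Ffun {π b : PtdPartBeta n} (hle : PtdPartBeta.le π b) :
    Gfun π (Ffun π b) = b.1 := by
  funext x
  unfold Gfun
  cases hfx : π.1 x with
  | none => exact ((hle.1 x hfx)).symm
  | some p =>
    have hbx : b.1 x = b.1 p := hle.2.1 x p hfx
    have hpp : π.1 p = some p := π.2.1 x p hfx
    simp only [Option.bind_some]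
    by_cases hps : p.2 = false
    · rw [if_pos hps, Ffun, if_pos (mem_Rset.mpr ⟨hpp, hps⟩), hbx]
    · have hnp : negE p ∈ Rset π := by
        refine mem_Rset.mpr ⟨pointed_neg π.2.2 hpp, ?_⟩
        simp only [Bool.not_eq_false] at hps
        simp [negE, hps]
      rw [if_neg hps]
      simp only [Ffun]
      rw [if_pos hnp, b.2.2 p, hbx]
      cases b.1 p with
      | none => rfl
      | some q => simp only [Option.map_some]; rw [negE_negE]

lemma Ffun_Gfun {π : PtdPartBeta n} {h : Fin n × Bool → Option (Fin n × Bool)} (hg : good π h) :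
    Ffun π (GElem π h hg) = h := by
  funext p
  unfold Ffun
  by_cases hp : p ∈ Rset π
  · rw [if_pos hp]
    show Gfun π h p = h p
    obtain ⟨hp1, hp2⟩ := mem_Rset.mp hp
    unfold Gfun
    rw [hp1]
    simp only [Option.bind_some]
    rw [if_pos hp2]
  · rw [if_neg hp]
    exact (hg.1 p hp).symm

/-- The set of roots (representatives of pointed pairs of the upper element). -/
noncomputable def Roots (π : PtdPartBeta n) (h : Fin n × Bool → Option (Fin n × Bool)) :
    Finset (Fin n × Bool) :=
  (Rset π).filter (fun p => h p = some p)

lemma pairs_of_le {π b : PtdPartBeta n} (hle : PtdPartBeta.le π b) :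
    PtdPartBeta.pairs b.1 = (Roots π (Ffun π b)).card := by
  rw [pairs_eq_card b.1 b.2.2]
  congr 1
  ext p
  simp only [Finset.mem_filter, Finset.mem_univ, true_and, Roots, mem_Rset]
  constructor
  · rintro ⟨hb, hs⟩
    have hπ : π.1 p = some p := hle.2.2 p hb
    exact ⟨⟨hπ, hs⟩, by rw [Ffun, if_pos (mem_Rset.mpr ⟨hπ, hs⟩)]; exact hb⟩
  · rintro ⟨⟨hπ, hs⟩, hF⟩
    rw [Ffun, if_pos (mem_Rset.mpr ⟨hπ, hs⟩)] at hF
    exact ⟨hF, hs⟩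

lemma sum_upper (π : PtdPartBeta n) (F : ℕ → ℤ) :
    ∑ b ∈ univ.filter (fun b => PtdPartBeta.le π b), F (PtdPartBeta.pairs b.1)
      = ∑ h ∈ univ.filter (good π), F ((Roots π h).card) := by
  refine Finset.sum_bij' (fun b _ => Ffun π b)
    (fun h hh => GElem π h (Finset.mem_filter.mp hh).2) ?_ ?_ ?_ ?_ ?_
  · intro b hb
    exact Finset.mem_filter.mpr ⟨Finset.mem_univ _, Ffun_good (Finset.mem_filter.mp hb).2⟩
  · intro h hh
    exact Finset.mem_filter.mpr ⟨Finset.mem_univ _, GElem_ge (Finset.mem_filter.mp hh).2⟩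
  · intro b hb
    exact Subtype.ext (Gfun_Ffun (Finset.mem_filter.mp hb).2)
  · intro h hh
    exact Ffun_Gfun (Finset.mem_filter.mp hh).2
  · intro b hb
    rw [pairs_of_le (Finset.mem_filter.mp hb).2]

lemma fiber_card (π : PtdPartBeta n) (J : Finset (Fin n × Bool)) (hJ : J ⊆ Rset π) :
    ((univ.filter (good π)).filter (fun h => Roots π h = J)).card
      = (2 * J.card + 1) ^ ((Rset π).card - J.card) := by
  classical
  set A : Finset (Option (Fin n × Bool)) :=
    insert none ((J.image some) ∪ (J.image (fun q => some (negE q)))) with hA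
  have hsnd : ∀ q ∈ J, q.2 = false := fun q hq => (mem_Rset.mp (hJ hq)).2
  have hcardA : A.card = 2 * J.card + 1 := by
    rw [hA, Finset.card_insert_of_notMem (by simp)]
    rw [Finset.card_union_of_disjoint]
    · rw [Finset.card_image_of_injective _ (Option.some_injective _),
        Finset.card_image_of_injective _
          (fun a b hab => negE_inj (Option.some_injective _ hab))]
      ring
    · rw [Finset.disjoint_left]
      rintro a ha hb
      obtain ⟨q, hq, rfl⟩ := Finset.mem_image.mp ha
      obtain ⟨q', hq', he⟩ := Finset.mem_image.mp hb
      have h1 := hsnd q hq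
      have h2 := hsnd q' hq'
      have := Option.some_injective _ he
      rw [← this] at h1
      simp [negE, h2] at h1
  have hbij : ((univ.filter (good π)).filter (fun h => Roots π h = J)).card
      = ((Rset π \ J).pi (fun _ => A)).card := by
    refine Finset.card_bij' (fun h _ => fun p _ => h p)
      (fun g _ => fun p => if hp : p ∈ Rset π \ J then g p hp else if p ∈ J then some p else none)
      ?_ ?_ ?_ ?_
    · intro h hh
      obtain ⟨hh1, hroots⟩ := Finset.mem_filter.mp hh
      have hgood : good π h := (Finset.mem_filter.mp hh1).2
      rw [Finset.mem_pi]
      intro p hp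
      obtain ⟨hpR, hpJ⟩ := Finset.mem_sdiff.mp hp
      cases hv : h p with
      | none => exact Finset.mem_insert_self _ _
      | some q =>
        obtain ⟨r, hrR, hr, hqr⟩ := hgood.2 p hpR q hv
        have hrJ : r ∈ J := by
          rw [← hroots]; exact Finset.mem_filter.mpr ⟨hrR, hr⟩
        refine Finset.mem_insert_of_mem (Finset.mem_union.mpr ?_)
        rcases hqr with rfl | rfl
        · exact Or.inl (Finset.mem_image_of_mem _ hrJ)
        · exact Or.inr (Finset.mem_image_of_mem _ hrJ)
    · intro g hg
      refine Finset.mem_filter.mpr ⟨Finset.mem_filter.mpr ⟨Finset.mem_univ _, ?_, ?_⟩, ?_⟩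
      · -- support condition
        intro p hp
        have hp1 : p ∉ Rset π \ J := fun hc => hp (Finset.mem_sdiff.mp hc).1
        have hp2 : p ∉ J := fun hc => hp (hJ hc)
        dsimp only
        rw [dif_neg hp1, if_neg hp2]
      · -- closure condition
        intro p hpR q hq
        dsimp only at hq ⊢
        by_cases hpJ : p ∈ J
        · have hps : p ∉ Rset π \ J := by simp [hpJ]
          rw [dif_neg hps, if_pos hpJ] at hq
          refine ⟨p, hpR, ?_, Or.inl (Option.some_injective _ hq).symm⟩
          rw [dif_neg hps, if_pos hpJ]
        · have hps : p ∈ Rset π \ J := Finset.mem_sdiff.mpr ⟨hpR, hpJ⟩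
          rw [dif_pos hps] at hq
          have hgA : g p hps ∈ A := Finset.mem_pi.mp hg p hps
          rw [hq, hA] at hgA
          rcases Finset.mem_insert.mp hgA with h1 | h1
          · exact absurd h1 (Option.some_ne_none q)
          rcases Finset.mem_union.mp h1 with h2 | h2
          · obtain ⟨r, hrJ, hre⟩ := Finset.mem_image.mp h2
            have hrs : r ∉ Rset π \ J := by simp [hrJ]
            refine ⟨r, hJ hrJ, ?_, Or.inl (Option.some_injective _ hre.symm)⟩
            rw [dif_neg hrs, if_pos hrJ]
          · obtain ⟨r, hrJ, hre⟩ := Finset.mem_image.mp h2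
            have hrs : r ∉ Rset π \ J := by simp [hrJ]
            refine ⟨r, hJ hrJ, ?_, Or.inr (Option.some_injective _ hre.symm)⟩
            rw [dif_neg hrs, if_pos hrJ]
      · -- roots = J
        ext p
        simp only [Roots, Finset.mem_filter, mem_Rset]
        constructor
        · rintro ⟨⟨hπ, hs⟩, hv⟩
          by_contra hpJ
          have hps : p ∈ Rset π \ J := Finset.mem_sdiff.mpr ⟨mem_Rset.mpr ⟨hπ, hs⟩, hpJ⟩
          rw [dif_pos hps] at hv
          have hgA : g p hps ∈ A := Finset.mem_pi.mp hg p hps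
          rw [hv, hA] at hgA
          rcases Finset.mem_insert.mp hgA with h1 | h1
          · exact Option.some_ne_none p h1
          rcases Finset.mem_union.mp h1 with h2 | h2
          · obtain ⟨r, hrJ, hre⟩ := Finset.mem_image.mp h2
            exact hpJ ((Option.some_injective _ hre) ▸ hrJ)
          · obtain ⟨r, hrJ, hre⟩ := Finset.mem_image.mp h2
            have := Option.some_injective _ hre
            have h3 := hsnd r hrJ
            rw [← this] at hs
            simp [negE, h3] at hs
        · intro hpJ
          have hps : p ∉ Rset π \ J := by simp [hpJ]
          refine ⟨(mem_Rset.mp (hJ hpJ)), ?_⟩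
          rw [dif_neg hps, if_pos hpJ]
    · -- left inverse
      intro h hh
      obtain ⟨hh1, hroots⟩ := Finset.mem_filter.mp hh
      have hgood : good π h := (Finset.mem_filter.mp hh1).2
      funext p
      dsimp only
      by_cases hps : p ∈ Rset π \ J
      · rw [dif_pos hps]
      · rw [dif_neg hps]
        by_cases hpJ : p ∈ J
        · rw [if_pos hpJ]
          rw [← hroots] at hpJ
          exact ((Finset.mem_filter.mp hpJ).2).symm
        · rw [if_neg hpJ]
          have hpR : p ∉ Rset π := by
            intro hc
            exact hps (Finset.mem_sdiff.mpr ⟨hc, hpJ⟩)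
          exact (hgood.1 p hpR).symm
    · -- right inverse
      intro g hg
      funext p hp
      dsimp only
      rw [dif_pos hp]
  rw [hbij, Finset.card_pi, Finset.prod_const, Finset.card_sdiff_of_subset hJ, hcardA]

noncomputable def Cj (j : ℕ) (x : ℤ) : ℤ :=
  if j = 0 then 1 else (x - 1) * (x - (2*(j:ℤ)+1))^(j-1)

lemma pairs_Rset (π : PtdPartBeta n) : PtdPartBeta.pairs π.1 = (Rset π).card :=
  pairs_eq_card π.1 π.2.2



theorem key (π : PtdPartBeta n) (x : ℤ) :
    ∑ b ∈ univ.filter (fun b => PtdPartBeta.le π b), Cj (PtdPartBeta.pairs b.1) x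
      = x ^ PtdPartBeta.pairs π.1 := by
  classical
  set k := (Rset π).card with hk
  have hmaps : ∀ h ∈ univ.filter (good π), Roots π h ∈ (Rset π).powerset := by
    intro h _
    exact Finset.mem_powerset.mpr (Finset.filter_subset _ _)
  have hinner : ∀ J ∈ (Rset π).powerset,
      ∑ h ∈ (univ.filter (good π)).filter (fun h => Roots π h = J), Cj ((Roots π h).card) x
        = (2 * (J.card:ℤ) + 1) ^ (k - J.card) * Cj J.card x := by
    intro J hJ
    have hc : ∀ h ∈ (univ.filter (good π)).filter (fun h => Roots π h = J),
        Cj ((Roots π h).card) x = Cj J.card x := by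
      intro h hh
      rw [(Finset.mem_filter.mp hh).2]
    rw [Finset.sum_congr rfl hc, Finset.sum_const,
      fiber_card π J (Finset.mem_powerset.mp hJ), nsmul_eq_mul]
    push_cast
    ring
  calc ∑ b ∈ univ.filter (fun b => PtdPartBeta.le π b), Cj (PtdPartBeta.pairs b.1) x
      = ∑ h ∈ univ.filter (good π), Cj ((Roots π h).card) x := sum_upper π (fun j => Cj j x)
    _ = ∑ J ∈ (Rset π).powerset,
          ∑ h ∈ (univ.filter (good π)).filter (fun h => Roots π h = J), Cj ((Roots π h).card) x :=
        (Finset.sum_fiberwise_of_maps_to hmaps _).symm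
    _ = ∑ J ∈ (Rset π).powerset, (2 * (J.card:ℤ) + 1) ^ (k - J.card) * Cj J.card x :=
        Finset.sum_congr rfl hinner
    _ = ∑ m ∈ range (k+1), k.choose m • ((2 * (m:ℤ) + 1) ^ (k - m) * Cj m x) :=
        Finset.sum_powerset_apply_card (fun m => (2 * (m:ℤ) + 1) ^ (k - m) * Cj m x)
    _ = ∑ j ∈ range (k+1), (k.choose j : ℤ)
          * (if j = 0 then 1 else (x-1) * ((x-1) - 2*j)^(j-1)) * (1 + 2*(j:ℤ))^(k-j) := by
        refine Finset.sum_congr rfl fun j _ => ?_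
        rw [nsmul_eq_mul, Cj]
        by_cases hj : j = 0
        · subst hj; norm_num
        · rw [if_neg hj, if_neg hj]
          have h1 : x - (2*(j:ℤ)+1) = (x-1) - 2*j := by ring
          have h2 : (2*(j:ℤ)+1) = 1 + 2*j := by ring
          rw [h1, h2]
          ring
    _ = (1 + (x-1))^k := abelId' k (x-1)
    _ = x ^ k := by norm_num
    _ = x ^ PtdPartBeta.pairs π.1 := by rw [pairs_Rset π]

lemma le_bot_iff' (a : PtdPartBeta n) :
    PtdPartBeta.le a (PtdPartBeta.bot n) ↔ a = PtdPartBeta.bot n := by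
  constructor
  · intro h
    refine Subtype.ext (funext fun x => ?_)
    exact h.2.2 x rfl
  · rintro rfl
    exact ⟨fun x hx => (Option.some_ne_none x hx).elim, fun x p hp => by
      rw [Option.some_injective _ hp], fun p _ => rfl⟩

lemma Rset_bot : Rset (PtdPartBeta.bot n) = univ.filter (fun p : Fin n × Bool => p.2 = false) := by
  ext p
  simp [Rset, PtdPartBeta.bot]

lemma card_snd_false : (univ.filter (fun p : Fin n × Bool => p.2 = false)).card = n := by
  have h : (univ.filter (fun p : Fin n × Bool => p.2 = false)).card
      = (univ : Finset (Fin n)).card := by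
    refine Finset.card_nbij' (fun p => p.1) (fun i => (i, false)) ?_ ?_ ?_ ?_
    · intro p _; exact Finset.mem_univ _
    · intro i _; simp
    · intro p hp
      rw [Finset.mem_coe, Finset.mem_filter] at hp
      exact Prod.ext rfl hp.2.symm
    · intro i _; rfl
  rw [h, Finset.card_univ, Fintype.card_fin]

lemma pairs_bot : PtdPartBeta.pairs (PtdPartBeta.bot n).1 = n := by
  rw [pairs_Rset, Rset_bot, card_snd_false]

lemma pairs_zero_iff (π : PtdPartBeta n) :
    PtdPartBeta.pairs π.1 = 0 ↔ π = PtdPartBeta.top n := by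
  constructor
  · intro h
    rw [pairs_Rset] at h
    have hR : Rset π = ∅ := Finset.card_eq_zero.mp h
    refine Subtype.ext (funext fun x => ?_)
    show π.1 x = none
    by_contra hx
    obtain ⟨q, hq⟩ := Option.ne_none_iff_exists'.mp hx
    have hqq : π.1 q = some q := π.2.1 x q hq
    by_cases hs : q.2 = false
    · have : q ∈ Rset π := mem_Rset.mpr ⟨hqq, hs⟩
      rw [hR] at this
      exact absurd this (Finset.notMem_empty _)
    · have : negE q ∈ Rset π := by
        refine mem_Rset.mpr ⟨pointed_neg π.2.2 hqq, ?_⟩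
        simp only [Bool.not_eq_false] at hs
        simp [negE, hs]
      rw [hR] at this
      exact absurd this (Finset.notMem_empty _)
  · rintro rfl
    rw [pairs_Rset]
    convert Finset.card_empty
    ext p
    simp [Rset, PtdPartBeta.top]


end Stmt11Aux

open Stmt11Aux

/-- The characteristic polynomial of `Π^β_n` is `(x-1)(x-(2n+1))^(n-1)`, with constant
term (= Möbius number of the bounded poset) `(-1)^n·(2n+1)^(n-1)`.  Here `mu` is the
Möbius function `μ(0̂,·)`, characterized by its defining recurrence; the rank of `π` is
`n` minus its number of pairs of opposite non-zero blocks, and the top rank is `n`. -/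
theorem stmt11 (n : ℕ) (hn : 1 ≤ n) (mu : PtdPartBeta n → ℤ)
    (h0 : mu (PtdPartBeta.bot n) = 1)
    (hrec : ∀ b : PtdPartBeta n, b ≠ PtdPartBeta.bot n →
      ∑ a ∈ univ.filter (fun a : PtdPartBeta n => PtdPartBeta.le a b), mu a = 0) :
    (∀ x : ℤ, ∑ π : PtdPartBeta n, mu π * x ^ (PtdPartBeta.pairs π.1)
        = (x - 1) * (x - (2 * (n : ℤ) + 1)) ^ (n - 1)) ∧
    mu (PtdPartBeta.top n) = (-1) ^ n * (2 * (n : ℤ) + 1) ^ (n - 1) := by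
  classical
  have hmusum : ∀ b : PtdPartBeta n,
      ∑ a ∈ univ.filter (fun a : PtdPartBeta n => PtdPartBeta.le a b), mu a
        = if b = PtdPartBeta.bot n then 1 else 0 := by
    intro b
    by_cases hb : b = PtdPartBeta.bot n
    · subst hb
      rw [if_pos rfl]
      have : univ.filter (fun a : PtdPartBeta n => PtdPartBeta.le a (PtdPartBeta.bot n))
          = {PtdPartBeta.bot n} := by
        ext a
        simp [le_bot_iff' a]
      rw [this, Finset.sum_singleton, h0]
    · rw [if_neg hb]
      exact hrec b hb
  have main : ∀ x : ℤ, ∑ π : PtdPartBeta n, mu π * x ^ (PtdPartBeta.pairs π.1)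
      = (x - 1) * (x - (2 * (n : ℤ) + 1)) ^ (n - 1) := by
    intro x
    calc ∑ π : PtdPartBeta n, mu π * x ^ (PtdPartBeta.pairs π.1)
        = ∑ π : PtdPartBeta n, mu π
            * ∑ b ∈ univ.filter (fun b => PtdPartBeta.le π b), Cj (PtdPartBeta.pairs b.1) x := by
          refine Finset.sum_congr rfl fun π _ => ?_
          rw [key π x]
      _ = ∑ π : PtdPartBeta n, ∑ b : PtdPartBeta n,
            (if PtdPartBeta.le π b then mu π * Cj (PtdPartBeta.pairs b.1) x else 0) := by
          refine Finset.sum_congr rfl fun π _ => ?_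
          rw [Finset.mul_sum, Finset.sum_filter]
      _ = ∑ b : PtdPartBeta n, ∑ π : PtdPartBeta n,
            (if PtdPartBeta.le π b then mu π * Cj (PtdPartBeta.pairs b.1) x else 0) :=
          Finset.sum_comm
      _ = ∑ b : PtdPartBeta n,
            (∑ π ∈ univ.filter (fun π => PtdPartBeta.le π b), mu π) * Cj (PtdPartBeta.pairs b.1) x := by
          refine Finset.sum_congr rfl fun b _ => ?_
          rw [Finset.sum_filter, Finset.sum_mul]
          refine Finset.sum_congr rfl fun π _ => ?_
          split <;> simp
      _ = ∑ b : PtdPartBeta n,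
            (if b = PtdPartBeta.bot n then (1:ℤ) else 0) * Cj (PtdPartBeta.pairs b.1) x := by
          refine Finset.sum_congr rfl fun b _ => ?_
          rw [hmusum b]
      _ = Cj (PtdPartBeta.pairs (PtdPartBeta.bot n).1) x := by
          rw [Finset.sum_eq_single (PtdPartBeta.bot n)]
          · rw [if_pos rfl, one_mul]
          · intro b _ hb
            rw [if_neg hb, zero_mul]
          · intro hb
            exact absurd (Finset.mem_univ _) hb
      _ = (x - 1) * (x - (2 * (n : ℤ) + 1)) ^ (n - 1) := by
          rw [pairs_bot, Cj, if_neg (by omega)]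
  refine ⟨main, ?_⟩
  have h := main 0
  have hL : ∑ π : PtdPartBeta n, mu π * (0:ℤ) ^ (PtdPartBeta.pairs π.1)
      = mu (PtdPartBeta.top n) := by
    rw [Finset.sum_eq_single (PtdPartBeta.top n)]
    · rw [(pairs_zero_iff (PtdPartBeta.top n)).mpr rfl, pow_zero, mul_one]
    · intro π _ hπ
      have : PtdPartBeta.pairs π.1 ≠ 0 := fun hc => hπ ((pairs_zero_iff π).mp hc)
      rw [zero_pow this, mul_zero]
    · intro hb
      exact absurd (Finset.mem_univ _) hb
  rw [hL] at h
  rw [h]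
  obtain ⟨m, rfl⟩ : ∃ m, n = m + 1 := ⟨n - 1, by omega⟩
  simp only [Nat.add_sub_cancel]
  push_cast
  rw [show (0 - (2*((m:ℤ)+1)+1)) = (-1) * (2*((m:ℤ)+1)+1) by ring, mul_pow]
  ring
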